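/- Let d ≥ 1, let f : ℝ^d → ℂ be a Schwartz function, and let t > 0. Then for every x ∈ ℝ^d, F⁻¹[ ξ ↦ e^{−it|ξ|²} (F f)(ξ) ](x) = (2it)^{−d/2} e^{i|x|²/(4t)} F[ y ↦ e^{i|y|²/(4t)} f(y) ]( x/(2t) ), where (2it)^{−d/2} is defined using the principal branch of the logarithm. That is, the free Schrödinger propagator factors as e^{itΔ} = M(t) D(t) F M(t), with M(t) multiplication by e^{i|x|²/(4t)} and D(t)h(x) = (2it)^{−d/2} h(x/(2t)). -/

import Mathlib

open MeasureTheory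

/-- The Fourier transform `F[f](ξ) = (2π)^{−d/2} ∫ e^{−i x·ξ} f(x) dx`. -/
noncomputable def ft {d : ℕ} (f : EuclideanSpace ℝ (Fin d) → ℂ)
    (ξ : EuclideanSpace ℝ (Fin d)) : ℂ :=
  (((2 * Real.pi) ^ (-(d : ℝ) / 2) : ℝ) : ℂ) *
    ∫ x, Complex.exp (-(Complex.I * ((inner ℝ x ξ : ℝ) : ℂ))) * f x

/-- The inverse Fourier transform `F⁻¹[g](x) = (2π)^{−d/2} ∫ e^{i x·ξ} g(ξ) dξ`. -/
noncomputable def ift {d : ℕ} (g : EuclideanSpace ℝ (Fin d) → ℂ)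
    (x : EuclideanSpace ℝ (Fin d)) : ℂ :=
  (((2 * Real.pi) ^ (-(d : ℝ) / 2) : ℝ) : ℂ) *
    ∫ ξ, Complex.exp (Complex.I * ((inner ℝ x ξ : ℝ) : ℂ)) * g ξ

open Complex Real Filter Topology FourierTransform

set_option maxHeartbeats 1000000

variable {d : ℕ}

lemma ft_eq_fourier (f : SchwartzMap (EuclideanSpace ℝ (Fin d)) ℂ)
    (ξ : EuclideanSpace ℝ (Fin d)) :
    ft (⇑f) ξ = (((2 * Real.pi) ^ (-(d : ℝ) / 2) : ℝ) : ℂ) *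
      𝓕 (⇑f) ((2 * Real.pi)⁻¹ • ξ) := by
  rw [ft, Real.fourier_eq']
  congr 1
  refine integral_congr_ae (Filter.Eventually.of_forall fun v => ?_)
  simp only [smul_eq_mul, real_inner_smul_right]
  have h2π : (2 * Real.pi) ≠ 0 := by positivity
  congr 1
  rw [show -2 * Real.pi * ((2 * Real.pi)⁻¹ * (inner ℝ v ξ : ℝ)) = -(inner ℝ v ξ : ℝ) by
    field_simp]
  push_cast
  ring

lemma ft_integrable (f : SchwartzMap (EuclideanSpace ℝ (Fin d)) ℂ) :
    Integrable (ft (⇑f)) := by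
  have h1 : Integrable (𝓕 (⇑f)) := by
    have := (SchwartzMap.fourierTransformCLM ℂ f).integrable (μ := volume)
    rwa [SchwartzMap.fourierTransformCLM_apply, SchwartzMap.fourier_coe] at this
  have h2 : Integrable (fun ξ : EuclideanSpace ℝ (Fin d) =>
      𝓕 (⇑f) ((2 * Real.pi)⁻¹ • ξ)) :=
    (integrable_comp_smul_iff volume (𝓕 (⇑f))
      (inv_ne_zero (by positivity : (2 * Real.pi) ≠ 0))).2 h1
  exact (h2.const_mul _).congr
    (Filter.Eventually.of_forall fun ξ => (ft_eq_fourier f ξ).symm)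

lemma ft_continuous (f : SchwartzMap (EuclideanSpace ℝ (Fin d)) ℂ) :
    Continuous (ft (⇑f)) := by
  have h1 : Continuous (𝓕 (⇑f)) := by
    have := (SchwartzMap.fourierTransformCLM ℂ f).continuous
    rwa [SchwartzMap.fourierTransformCLM_apply, SchwartzMap.fourier_coe] at this
  have : Continuous (fun ξ : EuclideanSpace ℝ (Fin d) =>
      (((2 * Real.pi) ^ (-(d : ℝ) / 2) : ℝ) : ℂ) *
        𝓕 (⇑f) ((2 * Real.pi)⁻¹ • ξ)) :=
    continuous_const.mul (h1.comp (continuous_const_smul ((2 * Real.pi)⁻¹)))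
  exact this.congr fun ξ => (ft_eq_fourier f ξ).symm

lemma key (f : SchwartzMap (EuclideanSpace ℝ (Fin d)) ℂ) {b : ℂ} (hb : 0 < b.re)
    (x : EuclideanSpace ℝ (Fin d)) :
    ∫ ξ : EuclideanSpace ℝ (Fin d),
        Complex.exp (Complex.I * ((inner ℝ x ξ : ℝ) : ℂ) - b * ((‖ξ‖ ^ 2 : ℝ) : ℂ)) * ft (⇑f) ξ
      = (((2 * Real.pi) ^ (-(d : ℝ) / 2) : ℝ) : ℂ) * ((↑Real.pi / b) ^ ((d : ℂ) / 2) *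
          ∫ y : EuclideanSpace ℝ (Fin d),
            Complex.exp (-((‖x - y‖ ^ 2 : ℝ) : ℂ) / (4 * b)) * f y) := by
  set C : ℂ := (((2 * Real.pi) ^ (-(d : ℝ) / 2) : ℝ) : ℂ) with hC
  set g : EuclideanSpace ℝ (Fin d) × EuclideanSpace ℝ (Fin d) → ℂ := fun p =>
    Complex.exp (Complex.I * ((inner ℝ x p.1 : ℝ) : ℂ) - b * ((‖p.1‖ ^ 2 : ℝ) : ℂ)
      + -(Complex.I * ((inner ℝ p.2 p.1 : ℝ) : ℂ))) * f p.2 with hg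
  have hgc : Continuous g := by
    apply Continuous.mul _ (f.continuous.comp continuous_snd)
    apply Complex.continuous_exp.comp
    have h1 : Continuous fun p : EuclideanSpace ℝ (Fin d) × EuclideanSpace ℝ (Fin d) =>
        (inner ℝ x p.1 : ℝ) := continuous_const.inner continuous_fst
    have h2 : Continuous fun p : EuclideanSpace ℝ (Fin d) × EuclideanSpace ℝ (Fin d) =>
        (inner ℝ p.2 p.1 : ℝ) := continuous_snd.inner continuous_fst
    have h3 : Continuous fun p : EuclideanSpace ℝ (Fin d) × EuclideanSpace ℝ (Fin d) =>
        (‖p.1‖ ^ 2 : ℝ) := (continuous_fst.norm.pow 2)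
    exact ((continuous_const.mul (Complex.continuous_ofReal.comp h1)).sub
      (continuous_const.mul (Complex.continuous_ofReal.comp h3))).add
      ((continuous_const.mul (Complex.continuous_ofReal.comp h2)).neg)
  have hgauss : Integrable (fun ξ : EuclideanSpace ℝ (Fin d) =>
      Complex.exp (-b * ((‖ξ‖ : ℂ)) ^ 2 + 0 * ((inner ℝ (0 : EuclideanSpace ℝ (Fin d)) ξ : ℝ) : ℂ))) :=
    GaussianFourier.integrable_cexp_neg_mul_sq_norm_add hb 0 0
  have hgi : Integrable g (volume.prod volume) := by
    refine Integrable.mono' ((hgauss.norm).mul_prod (f.integrable (μ := volume)).norm)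
      hgc.aestronglyMeasurable (Filter.Eventually.of_forall fun p => ?_)
    rw [hg]
    simp only [norm_mul, Complex.norm_exp]
    apply le_of_eq
    congr 2
    simp [Complex.add_re, Complex.sub_re, Complex.mul_re]
  calc ∫ ξ : EuclideanSpace ℝ (Fin d),
        Complex.exp (Complex.I * ((inner ℝ x ξ : ℝ) : ℂ) - b * ((‖ξ‖ ^ 2 : ℝ) : ℂ)) * ft (⇑f) ξ
      = ∫ ξ, C * ∫ y, g (ξ, y) := by
        refine integral_congr_ae (Filter.Eventually.of_forall fun ξ => ?_)
        dsimp only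
        rw [ft, ← hC, mul_left_comm, ← integral_const_mul]
        congr 1
        refine integral_congr_ae (Filter.Eventually.of_forall fun y => ?_)
        dsimp only
        rw [hg, ← mul_assoc, ← Complex.exp_add]
    _ = C * ∫ ξ, ∫ y, g (ξ, y) := integral_const_mul C _
    _ = C * ∫ y, ∫ ξ, g (ξ, y) := by
        rw [MeasureTheory.integral_integral_swap]
        exact hgi
    _ = C * ∫ y, (∫ ξ : EuclideanSpace ℝ (Fin d),
          Complex.exp (-b * (‖ξ‖ : ℂ) ^ 2 + Complex.I * ((inner ℝ (x - y) ξ : ℝ) : ℂ))) * f y := by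
        congr 1
        refine integral_congr_ae (Filter.Eventually.of_forall fun y => ?_)
        dsimp only
        rw [← integral_mul_const]
        refine integral_congr_ae (Filter.Eventually.of_forall fun ξ => ?_)
        dsimp only
        rw [hg]
        dsimp only
        refine congrArg (fun z => z * f y) ?_
        refine congrArg Complex.exp ?_
        rw [inner_sub_left]
        push_cast
        ring
    _ = C * ∫ y : EuclideanSpace ℝ (Fin d),
          ((↑Real.pi / b) ^ ((Module.finrank ℝ (EuclideanSpace ℝ (Fin d)) : ℂ) / 2) *
            Complex.exp (Complex.I ^ 2 * (‖x - y‖ : ℂ) ^ 2 / (4 * b))) * f y := by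
        congr 1
        refine integral_congr_ae (Filter.Eventually.of_forall fun y => ?_)
        dsimp only
        rw [GaussianFourier.integral_cexp_neg_mul_sq_norm_add hb Complex.I (x - y)]
    _ = C * ((↑Real.pi / b) ^ ((d : ℂ) / 2) *
          ∫ y : EuclideanSpace ℝ (Fin d),
            Complex.exp (-((‖x - y‖ ^ 2 : ℝ) : ℂ) / (4 * b)) * f y) := by
        rw [finrank_euclideanSpace_fin]
        congr 1
        rw [← integral_const_mul]
        refine integral_congr_ae (Filter.Eventually.of_forall fun y => ?_)
        dsimp only
        rw [mul_assoc]
        refine congrArg (fun z => (↑Real.pi / b) ^ ((d : ℂ) / 2) * z) ?_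
        refine congrArg (fun z => z * f y) ?_
        refine congrArg Complex.exp ?_
        push_cast
        rw [Complex.I_sq]
        ring

lemma ofReal_pos_mul_cpow {r : ℝ} (hr : 0 < r) {z : ℂ} (hz : z ≠ 0) (w : ℂ) :
    ((r : ℂ) * z) ^ w = (r : ℂ) ^ w * z ^ w := by
  have hr' : (r : ℂ) ≠ 0 := Complex.ofReal_ne_zero.mpr hr.ne'
  rw [Complex.cpow_def_of_ne_zero (mul_ne_zero hr' hz), Complex.log_ofReal_mul hr hz,
    Complex.cpow_def_of_ne_zero hr', Complex.cpow_def_of_ne_zero hz, ← Complex.exp_add,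
    ← Complex.ofReal_log hr.le, add_mul]

lemma cpow_aux (dd : ℕ) (t : ℝ) (ht : 0 < t) :
    (((2 * Real.pi) ^ (-(dd : ℝ) / 2) : ℝ) : ℂ) *
        (↑Real.pi / (Complex.I * ↑t)) ^ ((dd : ℂ) / 2)
      = (2 * Complex.I * ↑t) ^ (-(dd : ℂ) / 2) := by
  set w : ℂ := (dd : ℂ) / 2 with hw
  have h2t : (2 * Complex.I * (t : ℂ)) ≠ 0 := by
    simp [Complex.I_ne_zero, Complex.ofReal_ne_zero, ht.ne']
  have harg : (2 * Complex.I * (t : ℂ)).arg ≠ Real.pi := by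
    intro h
    rw [Complex.arg_eq_pi_iff] at h
    have h2 := h.2
    simp [Complex.mul_im, Complex.mul_re] at h2
    exact ht.ne' (by linarith)
  have hIt : Complex.I * (t : ℂ) ≠ 0 :=
    mul_ne_zero Complex.I_ne_zero (Complex.ofReal_ne_zero.mpr ht.ne')
  have hdiv : (↑Real.pi / (Complex.I * ↑t)) = ((2 * Real.pi : ℝ) : ℂ) * (2 * Complex.I * ↑t)⁻¹ := by
    push_cast
    field_simp
  have hC : (((2 * Real.pi) ^ (-(dd : ℝ) / 2) : ℝ) : ℂ) = ((2 * Real.pi : ℝ) : ℂ) ^ (-w) := by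
    rw [Complex.ofReal_cpow (by positivity)]
    congr 1
    rw [hw]
    push_cast
    ring
  have hne : ((2 * Real.pi : ℝ) : ℂ) ^ w ≠ 0 := by
    simp [Complex.cpow_eq_zero_iff]
  rw [hC, hdiv, ofReal_pos_mul_cpow (by positivity) (inv_ne_zero h2t) w,
    Complex.cpow_neg, Complex.inv_cpow _ _ harg, ← mul_assoc,
    inv_mul_cancel₀ hne, one_mul, ← Complex.cpow_neg, neg_div]

noncomputable def bseq (t : ℝ) (n : ℕ) : ℂ := ((1 / (n + 1) : ℝ) : ℂ) + Complex.I * (t : ℂ)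

lemma bseq_re (t : ℝ) (n : ℕ) : 0 < (bseq t n).re := by
  have : (bseq t n).re = (1 / (n + 1) : ℝ) := by
    simp only [bseq, Complex.add_re, Complex.ofReal_re, Complex.mul_re, Complex.I_re,
      Complex.I_im, Complex.ofReal_im]
    ring
  rw [this]
  positivity

lemma bseq_tendsto (t : ℝ) :
    Tendsto (bseq t) atTop (𝓝 (Complex.I * (t : ℂ))) := by
  have h1 : Tendsto (fun n : ℕ => (1 / (n + 1) : ℝ)) atTop (𝓝 0) :=
    tendsto_one_div_add_atTop_nhds_zero_nat
  have h2 := ((Complex.continuous_ofReal.tendsto 0).comp h1).add_const (Complex.I * (t : ℂ))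
  have h3 : bseq t = fun n : ℕ => ((1 / (n + 1) : ℝ) : ℂ) + Complex.I * (t : ℂ) := rfl
  rw [h3]
  simpa [Function.comp] using h2

lemma limL (f : SchwartzMap (EuclideanSpace ℝ (Fin d)) ℂ) (t : ℝ) (x : EuclideanSpace ℝ (Fin d)) :
    Tendsto (fun n : ℕ => ∫ ξ : EuclideanSpace ℝ (Fin d),
        Complex.exp (Complex.I * ((inner ℝ x ξ : ℝ) : ℂ) - bseq t n * ((‖ξ‖ ^ 2 : ℝ) : ℂ)) * ft (⇑f) ξ)
      atTop
      (𝓝 (∫ ξ : EuclideanSpace ℝ (Fin d),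
        Complex.exp (Complex.I * ((inner ℝ x ξ : ℝ) : ℂ)
          - Complex.I * (t : ℂ) * ((‖ξ‖ ^ 2 : ℝ) : ℂ)) * ft (⇑f) ξ)) := by
  apply tendsto_integral_filter_of_dominated_convergence (fun ξ => ‖ft (⇑f) ξ‖)
  · refine Filter.Eventually.of_forall fun n => Continuous.aestronglyMeasurable ?_
    apply Continuous.mul _ (ft_continuous f)
    apply Complex.continuous_exp.comp
    exact (continuous_const.mul (Complex.continuous_ofReal.comp
        (continuous_const.inner continuous_id))).sub
      (continuous_const.mul (Complex.continuous_ofReal.comp ((continuous_norm (E := EuclideanSpace ℝ (Fin d))).pow 2)))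
  · refine Filter.Eventually.of_forall fun n =>
      Filter.Eventually.of_forall fun ξ => ?_
    rw [norm_mul]
    apply mul_le_of_le_one_left (norm_nonneg _)
    rw [Complex.norm_exp, Real.exp_le_one_iff]
    have h1 : (Complex.I * ((inner ℝ x ξ : ℝ) : ℂ) - bseq t n * ((‖ξ‖ ^ 2 : ℝ) : ℂ)).re
        = -((1 / (n + 1) : ℝ) * ‖ξ‖ ^ 2) := by
      simp only [bseq, Complex.sub_re, Complex.mul_re, Complex.add_re, Complex.add_im,
        Complex.ofReal_re, Complex.ofReal_im, Complex.I_re, Complex.I_im, Complex.mul_im]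
      ring
    rw [h1]
    simp only [neg_nonpos]
    positivity
  · exact (ft_integrable f).norm
  · refine Filter.Eventually.of_forall fun ξ => ?_
    have hcont : Continuous fun b : ℂ =>
        Complex.exp (Complex.I * ((inner ℝ x ξ : ℝ) : ℂ) - b * ((‖ξ‖ ^ 2 : ℝ) : ℂ)) * ft (⇑f) ξ := by
      apply Continuous.mul _ continuous_const
      exact Complex.continuous_exp.comp (continuous_const.sub (continuous_id.mul continuous_const))
    exact (hcont.tendsto _).comp (bseq_tendsto t)

lemma exp_div_norm_le_one {c : ℝ} (hc : 0 ≤ c) {b : ℂ} (hb : 0 ≤ b.re) :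
    ‖Complex.exp (-(c : ℂ) / (4 * b))‖ ≤ 1 := by
  rw [Complex.norm_exp, Real.exp_le_one_iff, Complex.div_re]
  have h1 : ((-(c : ℂ)).re) = -c := by simp
  have h2 : ((-(c : ℂ)).im) = 0 := by simp
  rw [h1, h2, zero_mul, zero_div, add_zero]
  have h3 : 0 ≤ (4 * b).re := by
    have h4 : (4 * b).re = 4 * b.re := by
      simp [Complex.mul_re]
    rw [h4]
    linarith
  exact div_nonpos_iff.mpr (Or.inr ⟨by nlinarith, Complex.normSq_nonneg _⟩)

lemma limR (f : SchwartzMap (EuclideanSpace ℝ (Fin d)) ℂ) {t : ℝ} (ht : 0 < t)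
    (x : EuclideanSpace ℝ (Fin d)) :
    Tendsto (fun n : ℕ => ∫ y : EuclideanSpace ℝ (Fin d),
        Complex.exp (-((‖x - y‖ ^ 2 : ℝ) : ℂ) / (4 * bseq t n)) * f y) atTop
      (𝓝 (∫ y : EuclideanSpace ℝ (Fin d),
        Complex.exp (-((‖x - y‖ ^ 2 : ℝ) : ℂ) / (4 * (Complex.I * (t : ℂ)))) * f y)) := by
  apply tendsto_integral_filter_of_dominated_convergence (fun y => ‖f y‖)
  · refine Filter.Eventually.of_forall fun n => Continuous.aestronglyMeasurable ?_
    refine Continuous.mul ?_ f.continuous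
    apply Complex.continuous_exp.comp
    exact ((Complex.continuous_ofReal.comp
      (((continuous_const.sub continuous_id).norm.pow 2))).neg).div_const _
  · refine Filter.Eventually.of_forall fun n => Filter.Eventually.of_forall fun y => ?_
    rw [norm_mul]
    apply mul_le_of_le_one_left (norm_nonneg _)
    exact exp_div_norm_le_one (by positivity) (bseq_re t n).le
  · exact (f.integrable (μ := volume)).norm
  · refine Filter.Eventually.of_forall fun y => ?_
    have hne : (4 : ℂ) * (Complex.I * (t : ℂ)) ≠ 0 := by
      simp [Complex.I_ne_zero, Complex.ofReal_ne_zero, ht.ne']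
    have hcont : ContinuousAt (fun b : ℂ =>
        Complex.exp (-((‖x - y‖ ^ 2 : ℝ) : ℂ) / (4 * b)) * f y) (Complex.I * (t : ℂ)) := by
      apply ContinuousAt.mul _ continuousAt_const
      apply Complex.continuous_exp.continuousAt.comp
      exact ContinuousAt.div continuousAt_const
        ((continuous_const.mul continuous_id).continuousAt) hne
    exact hcont.tendsto.comp (bseq_tendsto t)

/-- The free Schrödinger propagator factors as `e^{itΔ} = M(t) D(t) F M(t)`, where
`M(t)` is multiplication by `e^{i|x|²/(4t)}` and `D(t)h(x) = (2it)^{−d/2} h(x/(2t))`,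
with `(2it)^{−d/2}` taken in the principal branch. -/
theorem stmt3 (d : ℕ) (hd : 1 ≤ d) (f : SchwartzMap (EuclideanSpace ℝ (Fin d)) ℂ)
    (t : ℝ) (ht : 0 < t) (x : EuclideanSpace ℝ (Fin d)) :
    ift (fun ξ => Complex.exp (-(Complex.I * ((t * ‖ξ‖ ^ 2 : ℝ) : ℂ))) *
        ft (fun y => f y) ξ) x
      = (2 * Complex.I * (t : ℂ)) ^ (-(d : ℂ) / 2) *
          Complex.exp (Complex.I * ((‖x‖ ^ 2 / (4 * t) : ℝ) : ℂ)) *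
          ft (fun y => Complex.exp (Complex.I * ((‖y‖ ^ 2 / (4 * t) : ℝ) : ℂ)) * f y)
            ((2 * t)⁻¹ • x) := by
  have hIt : Complex.I * (t : ℂ) ≠ 0 :=
    mul_ne_zero Complex.I_ne_zero (Complex.ofReal_ne_zero.mpr ht.ne')
  have h4 : (4 : ℂ) * (Complex.I * (t : ℂ)) ≠ 0 := by
    simp [Complex.I_ne_zero, Complex.ofReal_ne_zero, ht.ne']
  have h4t : (4 : ℂ) * (t : ℂ) ≠ 0 := by
    simp [Complex.ofReal_ne_zero, ht.ne']
  have htC : (t : ℂ) ≠ 0 := Complex.ofReal_ne_zero.mpr ht.ne'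
  set C : ℂ := (((2 * Real.pi) ^ (-(d : ℝ) / 2) : ℝ) : ℂ) with hCdef
  -- step (A): the limiting identity
  have hA : (∫ ξ : EuclideanSpace ℝ (Fin d),
        Complex.exp (Complex.I * ((inner ℝ x ξ : ℝ) : ℂ)
          - Complex.I * (t : ℂ) * ((‖ξ‖ ^ 2 : ℝ) : ℂ)) * ft (⇑f) ξ)
      = C * ((↑Real.pi / (Complex.I * (t : ℂ))) ^ ((d : ℂ) / 2) *
          ∫ y : EuclideanSpace ℝ (Fin d),
            Complex.exp (-((‖x - y‖ ^ 2 : ℝ) : ℂ) / (4 * (Complex.I * (t : ℂ)))) * f y) := by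
    have h1 := limL f t x
    have h3 : ∀ n : ℕ, (∫ ξ : EuclideanSpace ℝ (Fin d),
        Complex.exp (Complex.I * ((inner ℝ x ξ : ℝ) : ℂ) - bseq t n * ((‖ξ‖ ^ 2 : ℝ) : ℂ))
          * ft (⇑f) ξ)
        = C * ((↑Real.pi / bseq t n) ^ ((d : ℂ) / 2) *
            ∫ y : EuclideanSpace ℝ (Fin d),
              Complex.exp (-((‖x - y‖ ^ 2 : ℝ) : ℂ) / (4 * bseq t n)) * f y) :=
      fun n => key f (bseq_re t n) x
    have him : (↑Real.pi / (Complex.I * (t : ℂ))).im ≠ 0 := by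
      rw [Complex.div_im]
      simp only [Complex.ofReal_im, Complex.ofReal_re, Complex.mul_re, Complex.mul_im,
        Complex.I_re, Complex.I_im, Complex.normSq_apply]
      norm_num
      exact ht.ne'
    have hcpow : Tendsto (fun n : ℕ => (↑Real.pi / bseq t n) ^ ((d : ℂ) / 2)) atTop
        (𝓝 ((↑Real.pi / (Complex.I * (t : ℂ))) ^ ((d : ℂ) / 2))) := by
      have hdiv : Tendsto (fun n : ℕ => (↑Real.pi / bseq t n)) atTop
          (𝓝 (↑Real.pi / (Complex.I * (t : ℂ)))) :=
        Filter.Tendsto.div tendsto_const_nhds (bseq_tendsto t) hIt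
      exact ((continuousAt_cpow_const
        (Complex.mem_slitPlane_iff.mpr (Or.inr him))).tendsto).comp hdiv
    have h2 := Filter.Tendsto.const_mul C (hcpow.mul (limR f ht x))
    exact tendsto_nhds_unique (h1.congr h3) h2
  -- step (B): completing the square inside the y-integral
  have hscal : ∀ c : ℝ, -(c : ℂ) / (4 * (Complex.I * (t : ℂ)))
      = Complex.I * (c : ℂ) / (4 * (t : ℂ)) := by
    intro c
    rw [div_eq_div_iff h4 h4t]
    linear_combination (-(4 : ℂ) * (c : ℂ) * (t : ℂ)) * Complex.I_sq
  have hB : (∫ y : EuclideanSpace ℝ (Fin d),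
        Complex.exp (-((‖x - y‖ ^ 2 : ℝ) : ℂ) / (4 * (Complex.I * (t : ℂ)))) * f y)
      = Complex.exp (Complex.I * ((‖x‖ ^ 2 / (4 * t) : ℝ) : ℂ)) *
          ∫ y : EuclideanSpace ℝ (Fin d),
            Complex.exp (-(Complex.I * ((inner ℝ y ((2 * t)⁻¹ • x) : ℝ) : ℂ))) *
              (Complex.exp (Complex.I * ((‖y‖ ^ 2 / (4 * t) : ℝ) : ℂ)) * f y) := by
    rw [← integral_const_mul]
    refine integral_congr_ae (Filter.Eventually.of_forall fun y => ?_)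
    dsimp only
    have hexp : Complex.exp (-((‖x - y‖ ^ 2 : ℝ) : ℂ) / (4 * (Complex.I * (t : ℂ))))
        = Complex.exp (Complex.I * ((‖x‖ ^ 2 / (4 * t) : ℝ) : ℂ)) *
          (Complex.exp (-(Complex.I * ((inner ℝ y ((2 * t)⁻¹ • x) : ℝ) : ℂ))) *
            Complex.exp (Complex.I * ((‖y‖ ^ 2 / (4 * t) : ℝ) : ℂ))) := by
      rw [← Complex.exp_add, ← Complex.exp_add]
      refine congrArg Complex.exp ?_
      rw [hscal, real_inner_smul_right, norm_sub_sq_real, real_inner_comm y x]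
      push_cast
      field_simp
      ring
    rw [hexp]
    ring
  -- assemble
  rw [ift, ft, ← hCdef]
  have hL : (∫ ξ : EuclideanSpace ℝ (Fin d),
        Complex.exp (Complex.I * ((inner ℝ x ξ : ℝ) : ℂ)) *
          (Complex.exp (-(Complex.I * ((t * ‖ξ‖ ^ 2 : ℝ) : ℂ))) * ft (⇑f) ξ))
      = ∫ ξ : EuclideanSpace ℝ (Fin d),
        Complex.exp (Complex.I * ((inner ℝ x ξ : ℝ) : ℂ)
          - Complex.I * (t : ℂ) * ((‖ξ‖ ^ 2 : ℝ) : ℂ)) * ft (⇑f) ξ := by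
    refine integral_congr_ae (Filter.Eventually.of_forall fun ξ => ?_)
    dsimp only
    rw [← mul_assoc, ← Complex.exp_add]
    refine congrArg (fun z => z * ft (⇑f) ξ) ?_
    refine congrArg Complex.exp ?_
    push_cast
    ring
  rw [hL, hA, hB, ← cpow_aux d t ht]
  ring
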